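/- Let f_1, …, f_r and g_1, …, g_s be analytic functions on a neighborhood of 0 in ℂ^d, with each family not all identically zero, let k, ℓ ≥ 0 be integers, and let c ≥ 0 be real. Suppose u is analytic near 0 and can be written as a finite sum u = ∑_t c_t · f_{i(t,1)} ⋯ f_{i(t,k)}, where each c_t is analytic near 0 and each factor f_{i(t,j)} is one of f_1, …, f_r (i.e. u lies in the k-th power of the ideal generated by the f_i in the ring of analytic germs at 0). If h is analytic near 0 and z ↦ |h(z)|² / ((∑_i |f_i(z)|²)^ℓ · (∑_j |g_j(z)|²)^c) is locally integrable near 0, then z ↦ |u(z) h(z)|² / ((∑_i |f_i(z)|²)^{k+ℓ} · (∑_j |g_j(z)|²)^c) is locally integrable near 0. (This expresses the inclusion 𝔞^k · 𝒥(𝔞^ℓ 𝔟^c) ⊆ 𝒥(𝔞^{k+ℓ} 𝔟^c).) -/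

import Mathlib

open MeasureTheory

/-- A real-valued function on `ℂ^d` is locally integrable near the origin if it is
integrable (w.r.t. Lebesgue measure) on some neighborhood of `0`. -/
def LocIntegrableNearOrigin {d : ℕ} (g : (Fin d → ℂ) → ℝ) : Prop :=
  ∃ U ∈ nhds (0 : Fin d → ℂ), IntegrableOn g U volume

/-- The inclusion `𝔞^k · 𝒥(𝔞^ℓ 𝔟^c) ⊆ 𝒥(𝔞^{k+ℓ} 𝔟^c)`, local analytic form: if `u`
lies in the `k`-th power of the ideal generated by the `fᵢ` (i.e. `u` is a finite
sum of products of `k` of the `fᵢ` with analytic coefficients) and `h` satisfies the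
integrability condition for `𝔞^ℓ 𝔟^c`, then `u·h` satisfies the integrability
condition for `𝔞^{k+ℓ} 𝔟^c`. -/
theorem power_ideal_multiplier_inclusion {d r s : ℕ}
    (f : Fin r → (Fin d → ℂ) → ℂ) (g : Fin s → (Fin d → ℂ) → ℂ)
    (U : Set (Fin d → ℂ)) (hU : U ∈ nhds 0)
    (hf : ∀ i, ∀ z ∈ U, AnalyticAt ℂ (f i) z)
    (hg : ∀ j, ∀ z ∈ U, AnalyticAt ℂ (g j) z)
    (hfnz : ∀ V ∈ nhds (0 : Fin d → ℂ), ∃ z ∈ V, ∃ i, f i z ≠ 0)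
    (hgnz : ∀ V ∈ nhds (0 : Fin d → ℂ), ∃ z ∈ V, ∃ j, g j z ≠ 0)
    (k l : ℕ) (c : ℝ) (hc : 0 ≤ c)
    (u : (Fin d → ℂ) → ℂ) (hu : ∀ z ∈ U, AnalyticAt ℂ u z)
    (hmem : ∃ (T : ℕ) (coeff : Fin T → (Fin d → ℂ) → ℂ)
      (idx : Fin T → Fin k → Fin r) (V : Set (Fin d → ℂ)), V ∈ nhds 0 ∧
      (∀ t, ∀ z ∈ V, AnalyticAt ℂ (coeff t) z) ∧
      ∀ z ∈ V, u z = ∑ t, coeff t z * ∏ j, f (idx t j) z)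
    (h : (Fin d → ℂ) → ℂ) (hh : ∀ z ∈ U, AnalyticAt ℂ h z)
    (hint : LocIntegrableNearOrigin fun z =>
      ‖h z‖ ^ 2 / ((∑ i, ‖f i z‖ ^ 2) ^ l * (∑ j, ‖g j z‖ ^ 2) ^ c)) :
    LocIntegrableNearOrigin fun z =>
      ‖u z * h z‖ ^ 2 / ((∑ i, ‖f i z‖ ^ 2) ^ (k + l) * (∑ j, ‖g j z‖ ^ 2) ^ c) := by
  classical
  obtain ⟨T, coeff, idx, V, hV, hcoeff, hrep⟩ := hmem
  obtain ⟨U₀, hU₀, hint⟩ := hint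
  -- choose a closed ball inside U ∩ V ∩ U₀
  have hUVU₀ : U ∩ V ∩ U₀ ∈ nhds (0 : Fin d → ℂ) :=
    Filter.inter_mem (Filter.inter_mem hU hV) hU₀
  obtain ⟨ε, hε, hball⟩ := Metric.nhds_basis_closedBall.mem_iff.mp hUVU₀
  set W : Set (Fin d → ℂ) := Metric.closedBall 0 ε with hWdef
  have hWU : W ⊆ U := fun z hz => (hball hz).1.1
  have hWV : W ⊆ V := fun z hz => (hball hz).1.2
  have hWU₀ : W ⊆ U₀ := fun z hz => (hball hz).2
  have hWmeas : MeasurableSet W := Metric.isClosed_closedBall.measurableSet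
  have hWcpt : IsCompact W := isCompact_closedBall _ _
  -- abbreviations
  set F : (Fin d → ℂ) → ℝ := fun z => ∑ i, ‖f i z‖ ^ 2 with hF
  set G : (Fin d → ℂ) → ℝ := fun z => ∑ j, ‖g j z‖ ^ 2 with hG
  have hFnn : ∀ z, 0 ≤ F z := fun z => Finset.sum_nonneg fun i _ => sq_nonneg _
  have hGnn : ∀ z, 0 ≤ G z := fun z => Finset.sum_nonneg fun j _ => sq_nonneg _
  -- continuity facts on W
  have hfc : ∀ i, ContinuousOn (f i) W := fun i z hz =>
    ((hf i z (hWU hz)).continuousAt).continuousWithinAt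
  have hgc : ∀ j, ContinuousOn (g j) W := fun j z hz =>
    ((hg j z (hWU hz)).continuousAt).continuousWithinAt
  have huc : ContinuousOn u W := fun z hz =>
    ((hu z (hWU hz)).continuousAt).continuousWithinAt
  have hhc : ContinuousOn h W := fun z hz =>
    ((hh z (hWU hz)).continuousAt).continuousWithinAt
  have hFc : ContinuousOn F W := continuousOn_finset_sum _ fun i _ =>
    ((hfc i).norm).pow 2
  have hGc : ContinuousOn G W := continuousOn_finset_sum _ fun j _ =>
    ((hgc j).norm).pow 2
  -- bound on the coefficients
  have hcc : ContinuousOn (fun z => ∑ t, ‖coeff t z‖) W :=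
    continuousOn_finset_sum _ fun t _ =>
      (show ContinuousOn (coeff t) W from fun z hz =>
        ((hcoeff t z (hWV hz)).continuousAt).continuousWithinAt).norm
  obtain ⟨M₀, hM₀⟩ := hWcpt.exists_bound_of_continuousOn hcc
  set M : ℝ := max M₀ 0 with hMdef
  have hMnn : 0 ≤ M := le_max_right _ _
  have hM : ∀ z ∈ W, ∑ t, ‖coeff t z‖ ≤ M := by
    intro z hz
    calc ∑ t, ‖coeff t z‖ ≤ ‖∑ t, ‖coeff t z‖‖ := le_abs_self _
      _ ≤ M₀ := hM₀ z hz
      _ ≤ M := le_max_left _ _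
  -- the key pointwise estimate : ‖u z‖ ^ 2 ≤ M ^ 2 * F z ^ k on W
  have hkey : ∀ z ∈ W, ‖u z‖ ^ 2 ≤ M ^ 2 * F z ^ k := by
    intro z hz
    have hsq : ∀ i, ‖f i z‖ ≤ Real.sqrt (F z) := by
      intro i
      have h1 : ‖f i z‖ ^ 2 ≤ F z :=
        Finset.single_le_sum (f := fun i => ‖f i z‖ ^ 2)
          (fun i _ => sq_nonneg _) (Finset.mem_univ i)
      calc ‖f i z‖ = Real.sqrt (‖f i z‖ ^ 2) := (Real.sqrt_sq (norm_nonneg _)).symm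
        _ ≤ Real.sqrt (F z) := Real.sqrt_le_sqrt h1
    have hub : ‖u z‖ ≤ M * Real.sqrt (F z) ^ k := by
      rw [hrep z (hWV hz)]
      calc ‖∑ t, coeff t z * ∏ j, f (idx t j) z‖
          ≤ ∑ t, ‖coeff t z * ∏ j, f (idx t j) z‖ := norm_sum_le _ _
        _ ≤ ∑ t, ‖coeff t z‖ * Real.sqrt (F z) ^ k := by
            apply Finset.sum_le_sum
            intro t _
            rw [norm_mul]
            apply mul_le_mul_of_nonneg_left _ (norm_nonneg _)
            calc ‖∏ j, f (idx t j) z‖ = ∏ j, ‖f (idx t j) z‖ := norm_prod _ _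
              _ ≤ ∏ _j : Fin k, Real.sqrt (F z) :=
                  Finset.prod_le_prod (fun j _ => norm_nonneg _) (fun j _ => hsq _)
              _ = Real.sqrt (F z) ^ k := by
                  rw [Finset.prod_const, Finset.card_univ, Fintype.card_fin]
        _ = (∑ t, ‖coeff t z‖) * Real.sqrt (F z) ^ k := by
            rw [← Finset.sum_mul]
        _ ≤ M * Real.sqrt (F z) ^ k := by
            apply mul_le_mul_of_nonneg_right (hM z hz)
            positivity
    have := pow_le_pow_left₀ (norm_nonneg _) hub 2
    calc ‖u z‖ ^ 2 ≤ (M * Real.sqrt (F z) ^ k) ^ 2 := this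
      _ = M ^ 2 * (Real.sqrt (F z) ^ 2) ^ k := by ring
      _ = M ^ 2 * F z ^ k := by rw [Real.sq_sqrt (hFnn z)]
  -- pointwise domination
  have hdom : ∀ z ∈ W,
      ‖u z * h z‖ ^ 2 / (F z ^ (k + l) * G z ^ c)
        ≤ M ^ 2 * (‖h z‖ ^ 2 / (F z ^ l * G z ^ c)) := by
    intro z hz
    set N : ℝ := F z ^ k with hN
    set D : ℝ := F z ^ l * G z ^ c with hD
    have hNnn : 0 ≤ N := pow_nonneg (hFnn z) _
    have hDnn : 0 ≤ D := mul_nonneg (pow_nonneg (hFnn z) _)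
      (Real.rpow_nonneg (hGnn z) _)
    have hden : F z ^ (k + l) * G z ^ c = N * D := by
      rw [hN, hD, pow_add]; ring
    rw [hden, norm_mul, mul_pow]
    rcases eq_or_lt_of_le (mul_nonneg hNnn hDnn) with heq | hpos
    · rw [← heq, div_zero]
      positivity
    · have hNne : N ≠ 0 := fun h0 => by simp [h0] at hpos
      have hDne : D ≠ 0 := fun h0 => by simp [h0] at hpos
      calc ‖u z‖ ^ 2 * ‖h z‖ ^ 2 / (N * D)
          ≤ (M ^ 2 * N) * ‖h z‖ ^ 2 / (N * D) := by
            gcongr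
            exact hkey z hz
        _ = M ^ 2 * (‖h z‖ ^ 2 / D) := by
            field_simp
  -- conclude
  refine ⟨W, Metric.closedBall_mem_nhds 0 hε, ?_⟩
  have hintW : IntegrableOn
      (fun z => M ^ 2 * (‖h z‖ ^ 2 / (F z ^ l * G z ^ c))) W volume :=
    (hint.mono_set hWU₀).const_mul _
  apply Integrable.mono' hintW
  · -- a.e. strong measurability
    have hnum : ContinuousOn (fun z => ‖u z * h z‖ ^ 2) W :=
      (((huc.mul hhc).norm).pow 2)
    have hden : ContinuousOn (fun z => F z ^ (k + l) * G z ^ c) W := by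
      apply (hFc.pow (k + l)).mul
      exact hGc.rpow_const (fun z _ => Or.inr hc)
    exact ((hnum.aemeasurable hWmeas).div
      (hden.aemeasurable hWmeas)).aestronglyMeasurable
  · -- pointwise bound, a.e. on W
    rw [MeasureTheory.ae_restrict_iff' hWmeas]
    filter_upwards with z hz
    have hnn : 0 ≤ ‖u z * h z‖ ^ 2 / (F z ^ (k + l) * G z ^ c) := by
      apply div_nonneg (sq_nonneg _)
      exact mul_nonneg (pow_nonneg (hFnn z) _) (Real.rpow_nonneg (hGnn z) _)
    rw [Real.norm_of_nonneg hnn]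
    exact hdom z hz
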